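/- arXiv:1710.05760 — 2 statements merged into one kernel-verified Lean document; each statement's English description precedes it below -/
import Mathlib

section
/- The regularizing fractional Brownian motion 𝔹^H admits no Hölder continuous modification of any positive order: for every γ ∈ (0,1] there is no stochastic process Y = (Y_t)_{t∈[0,T]} with P(Y_t = 𝔹^H_t) = 1 for every t ∈ [0,T] whose sample paths are P-a.s. γ-Hölder continuous on [0,T]. -/
open MeasureTheory Real Filter Set
open scoped ENNReal NNReal BigOperators Classical

noncomputable section

/-- fBm covariance `R_H(t,s) = (t^{2H} + s^{2H} - |t-s|^{2H})/2`. -/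
def fbmCov (H t s : ℝ) : ℝ := (t ^ (2 * H) + s ^ (2 * H) - |t - s| ^ (2 * H)) / 2

/-- A family `B n` of independent `d`-dimensional fractional Brownian motions on `[0,T]`
with Hurst parameters `Hs n` (`Hs n ∈ (0,1/2)`, `Hs n ↓ 0`) and weights `lam`
(`0 < ∑|lam n| < ∞`, `lam n ≠ 0` for infinitely many `n`): the data of a regularizing
fractional Brownian motion.  Gaussianity, centering, independence of the components
and of the family, and the covariance structure are encoded through the joint
characteristic function. -/
structure IsRegFBM {Ω : Type*} [MeasurableSpace Ω] (d : ℕ) (T : ℝ) (P : Measure Ω)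
    (Hs lam : ℕ → ℝ) (B : ℕ → ℝ → Ω → EuclideanSpace ℝ (Fin d)) : Prop where
  Hmem : ∀ n, Hs n ∈ Set.Ioo (0 : ℝ) (1 / 2)
  Hanti : Antitone Hs
  Hlim : Filter.Tendsto Hs Filter.atTop (nhds 0)
  lam_summable : Summable fun n => |lam n|
  lam_pos : 0 < ∑' n, |lam n|
  lam_inf : {n | lam n ≠ 0}.Infinite
  meas : ∀ n t, Measurable (B n t)
  charFun : ∀ (k : ℕ) (ns : Fin k → ℕ) (ts : Fin k → ℝ)
      (ξ : Fin k → EuclideanSpace ℝ (Fin d)), (∀ j, ts j ∈ Set.Icc 0 T) →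
      ∫ ω, Complex.exp (Complex.I * (∑ j, (inner ℝ (ξ j) (B (ns j) (ts j) ω) : ℝ))) ∂P
        = Complex.exp (-(1 / 2 : ℂ) * ∑ j, ∑ j',
            if ns j = ns j' then
              (((inner ℝ (ξ j) (ξ j') : ℝ) * fbmCov (Hs (ns j)) (ts j) (ts j') : ℝ) : ℂ)
            else 0)

/-- The regularizing fractional Brownian motion `𝔹^H_t = ∑ₙ λₙ B_t^{Hₙ,n}`. -/
def regFBM {Ω : Type*} {d : ℕ} (lam : ℕ → ℝ) (B : ℕ → ℝ → Ω → EuclideanSpace ℝ (Fin d)) :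
    ℝ → Ω → EuclideanSpace ℝ (Fin d) :=
  fun t ω => ∑' n, lam n • B n t ω



section Aux
open Topology

variable {Ω : Type*} [MeasurableSpace Ω] {P : Measure Ω} [IsProbabilityMeasure P]

private lemma key_squeeze (x : ℝ) :
    Tendsto (fun k : ℕ => 2 * ((k : ℝ) + 1) ^ 2 * (1 - Real.cos (((k : ℝ) + 1)⁻¹ * x)))
      atTop (𝓝 (x ^ 2)) := by
  have htpos : ∀ k : ℕ, (0:ℝ) < ((k : ℝ) + 1)⁻¹ := fun k => by positivity
  apply tendsto_of_tendsto_of_tendsto_of_le_of_le'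
    (g := fun k : ℕ => x ^ 2 - (((k:ℝ) + 1)⁻¹) ^ 2 * (x ^ 4 * (5 / 48)))
    (h := fun _ : ℕ => x ^ 2)
  · have h0 : Tendsto (fun k : ℕ => (((k:ℝ) + 1)⁻¹) ^ 2 * (x ^ 4 * (5 / 48))) atTop (𝓝 0) := by
      have h1 : Tendsto (fun k : ℕ => ((k:ℝ) + 1)⁻¹) atTop (𝓝 0) := by
        simpa [one_div] using tendsto_one_div_add_atTop_nhds_zero_nat (𝕜 := ℝ)
      simpa using ((h1.pow 2).mul_const (x ^ 4 * (5 / 48)))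
    simpa using tendsto_const_nhds.sub h0
  · exact tendsto_const_nhds
  · filter_upwards [eventually_ge_atTop (Nat.ceil (|x|))] with k hk
    have hb : |((k:ℝ) + 1)⁻¹ * x| ≤ 1 := by
      rw [abs_mul, abs_of_pos (htpos k), inv_mul_le_iff₀ (by positivity), mul_one]
      calc |x| ≤ (Nat.ceil (|x|) : ℝ) := Nat.le_ceil _
        _ ≤ (k : ℝ) := by exact_mod_cast hk
        _ ≤ (k : ℝ) + 1 := by linarith
    have hcb := abs_le.1 (Real.cos_bound hb)
    have habs : |((k:ℝ) + 1)⁻¹ * x| ^ 4 = (((k:ℝ) + 1)⁻¹ * x) ^ 4 := by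
      rw [← abs_pow, abs_of_nonneg (by positivity)]
    have h1 : (((k:ℝ) + 1)⁻¹ * x) ^ 2 / 2 - (((k:ℝ) + 1)⁻¹ * x) ^ 4 * (5 / 96)
        ≤ 1 - Real.cos (((k:ℝ) + 1)⁻¹ * x) := by
      rw [habs] at hcb; linarith [hcb.2]
    have hA : (0:ℝ) ≤ 2 * ((k : ℝ) + 1) ^ 2 := by positivity
    have h2 := mul_le_mul_of_nonneg_left h1 hA
    have hid : 2 * ((k : ℝ) + 1) ^ 2 *
        ((((k:ℝ) + 1)⁻¹ * x) ^ 2 / 2 - (((k:ℝ) + 1)⁻¹ * x) ^ 4 * (5 / 96))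
        = x ^ 2 - (((k:ℝ) + 1)⁻¹) ^ 2 * (x ^ 4 * (5 / 48)) := by
      have hne : ((k:ℝ) + 1) ≠ 0 := by positivity
      field_simp
      ring
    rw [hid] at h2
    exact h2
  · filter_upwards with k
    have h1 : 1 - Real.cos (((k:ℝ) + 1)⁻¹ * x) ≤ (((k:ℝ) + 1)⁻¹ * x) ^ 2 / 2 := by
      linarith [Real.one_sub_sq_div_two_le_cos (x := ((k:ℝ) + 1)⁻¹ * x)]
    have hA : (0:ℝ) ≤ 2 * ((k : ℝ) + 1) ^ 2 := by positivity
    have h2 := mul_le_mul_of_nonneg_left h1 hA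
    have hid : 2 * ((k : ℝ) + 1) ^ 2 * ((((k:ℝ) + 1)⁻¹ * x) ^ 2 / 2) = x ^ 2 := by
      have hne : ((k:ℝ) + 1) ≠ 0 := by positivity
      field_simp
    rw [hid] at h2
    exact h2

lemma integrable_of_bdd {f : Ω → ℝ} (hf : AEMeasurable f P) {C : ℝ}
    (h : ∀ ω, |f ω| ≤ C) : Integrable f P := by
  refine Integrable.mono' (integrable_const C) hf.aestronglyMeasurable ?_
  exact ae_of_all _ fun ω => by simpa [Real.norm_eq_abs] using h ω


lemma lintegral_sq_le_of_cos {X : Ω → ℝ} (hX : AEMeasurable X P) {v : ℝ}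
    (h : ∀ s : ℝ, ∫ ω, Real.cos (s * X ω) ∂P = Real.exp (-(s ^ 2 * v) / 2)) :
    ∫⁻ ω, ENNReal.ofReal (X ω ^ 2) ∂P ≤ ENNReal.ofReal v := by
  set g : ℕ → Ω → ℝ := fun k ω =>
    2 * ((k : ℝ) + 1) ^ 2 * (1 - Real.cos (((k : ℝ) + 1)⁻¹ * X ω)) with hg
  have hgmeas : ∀ k, AEMeasurable (g k) P := by
    intro k
    have h1 : AEMeasurable (fun ω => ((k:ℝ) + 1)⁻¹ * X ω) P := hX.const_mul _
    have h2 : AEMeasurable (fun ω => Real.cos (((k:ℝ) + 1)⁻¹ * X ω)) P :=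
      Real.measurable_cos.comp_aemeasurable h1
    exact (aemeasurable_const.sub h2).const_mul _
  have hgbdd : ∀ k ω, |g k ω| ≤ 2 * ((k : ℝ) + 1) ^ 2 * 2 := by
    intro k ω
    rw [hg, abs_mul]
    have h1 : |1 - Real.cos (((k:ℝ) + 1)⁻¹ * X ω)| ≤ 2 := by
      rw [abs_le]
      constructor <;> nlinarith [Real.neg_one_le_cos (((k:ℝ) + 1)⁻¹ * X ω),
        Real.cos_le_one (((k:ℝ) + 1)⁻¹ * X ω)]
    have h2 : |2 * ((k : ℝ) + 1) ^ 2| = 2 * ((k : ℝ) + 1) ^ 2 := abs_of_pos (by positivity)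
    rw [h2]
    have : (0:ℝ) ≤ 2 * ((k : ℝ) + 1) ^ 2 := by positivity
    exact mul_le_mul_of_nonneg_left h1 this
  have hgint : ∀ k, Integrable (g k) P := fun k => integrable_of_bdd (hgmeas k) (hgbdd k)
  have hgnn : ∀ k ω, 0 ≤ g k ω := by
    intro k ω
    have := Real.cos_le_one (((k:ℝ) + 1)⁻¹ * X ω)
    have h2 : (0:ℝ) ≤ 2 * ((k : ℝ) + 1) ^ 2 := by positivity
    rw [hg]
    have : 0 ≤ 1 - Real.cos (((k:ℝ) + 1)⁻¹ * X ω) := by linarith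
    positivity
  have hkey : ∀ k, ∫⁻ ω, ENNReal.ofReal (g k ω) ∂P ≤ ENNReal.ofReal v := by
    intro k
    rw [← ofReal_integral_eq_lintegral_ofReal (hgint k) (ae_of_all _ (hgnn k))]
    apply ENNReal.ofReal_le_ofReal
    have hint : ∫ ω, g k ω ∂P
        = 2 * ((k : ℝ) + 1) ^ 2 * (1 - Real.exp (-((((k:ℝ)+1)⁻¹) ^ 2 * v) / 2)) := by
      rw [hg]
      simp only
      have hcos : Integrable (fun ω => Real.cos (((k:ℝ)+1)⁻¹ * X ω)) P :=
        integrable_of_bdd (by exact Real.measurable_cos.comp_aemeasurable (hX.const_mul _))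
          (C := 1) (fun ω => Real.abs_cos_le_one _)
      rw [integral_const_mul, integral_sub (integrable_const 1) hcos,
        integral_const, h (((k:ℝ)+1)⁻¹)]
      simp
    rw [hint]
    have hexp : 1 - Real.exp (-((((k:ℝ)+1)⁻¹) ^ 2 * v) / 2) ≤ (((k:ℝ)+1)⁻¹) ^ 2 * v / 2 := by
      have := Real.add_one_le_exp (-((((k:ℝ)+1)⁻¹) ^ 2 * v) / 2)
      linarith
    have hA : (0:ℝ) ≤ 2 * ((k : ℝ) + 1) ^ 2 := by positivity
    calc 2 * ((k : ℝ) + 1) ^ 2 * (1 - Real.exp (-((((k:ℝ)+1)⁻¹) ^ 2 * v) / 2))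
        ≤ 2 * ((k : ℝ) + 1) ^ 2 * ((((k:ℝ)+1)⁻¹) ^ 2 * v / 2) :=
          mul_le_mul_of_nonneg_left hexp hA
      _ = v := by
          have hne : ((k:ℝ) + 1) ≠ 0 := by positivity
          field_simp
  have hpt : ∀ ω, ENNReal.ofReal (X ω ^ 2) ≤ atTop.liminf fun k => ENNReal.ofReal (g k ω) := by
    intro ω
    have : Tendsto (fun k => ENNReal.ofReal (g k ω)) atTop (𝓝 (ENNReal.ofReal (X ω ^ 2))) :=
      (ENNReal.continuous_ofReal.tendsto _).comp (key_squeeze (X ω))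
    exact le_of_eq this.liminf_eq.symm
  calc ∫⁻ ω, ENNReal.ofReal (X ω ^ 2) ∂P
      ≤ ∫⁻ ω, atTop.liminf (fun k => ENNReal.ofReal (g k ω)) ∂P := lintegral_mono hpt
    _ ≤ atTop.liminf (fun k => ∫⁻ ω, ENNReal.ofReal (g k ω) ∂P) :=
        lintegral_liminf_le' fun k => ENNReal.measurable_ofReal.comp_aemeasurable (hgmeas k)
    _ ≤ ENNReal.ofReal v := by
        refine liminf_le_of_le (by isBoundedDefault) ?_
        intro b hb
        obtain ⟨k, hk⟩ := hb.exists
        exact hk.trans (hkey k)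

/-- first absolute moment bound -/
lemma lintegral_abs_le_of_cos {X : Ω → ℝ} (hX : AEMeasurable X P) {v : ℝ}
    (h : ∀ s : ℝ, ∫ ω, Real.cos (s * X ω) ∂P = Real.exp (-(s ^ 2 * v) / 2)) :
    ∫⁻ ω, ENNReal.ofReal |X ω| ∂P ≤ (1 + ENNReal.ofReal v) / 2 := by
  have h1 : ∀ ω, ENNReal.ofReal |X ω| ≤ (1 + ENNReal.ofReal (X ω ^ 2)) / 2 := by
    intro ω
    have : |X ω| ≤ (1 + X ω ^ 2) / 2 := by nlinarith [sq_nonneg (|X ω| - 1), sq_abs (X ω)]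
    calc ENNReal.ofReal |X ω| ≤ ENNReal.ofReal ((1 + X ω ^ 2) / 2) := ENNReal.ofReal_le_ofReal this
      _ = (1 + ENNReal.ofReal (X ω ^ 2)) / 2 := by
          rw [ENNReal.ofReal_div_of_pos (by norm_num), ENNReal.ofReal_add (by norm_num)
            (sq_nonneg _), ENNReal.ofReal_one, ENNReal.ofReal_ofNat]
  calc ∫⁻ ω, ENNReal.ofReal |X ω| ∂P ≤ ∫⁻ ω, (1 + ENNReal.ofReal (X ω ^ 2)) / 2 ∂P :=
        lintegral_mono h1
    _ = (∫⁻ ω, (1 + ENNReal.ofReal (X ω ^ 2)) ∂P) / 2 := by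
        simp_rw [div_eq_mul_inv]
        rw [lintegral_mul_const' _ _ (by simp)]
    _ = (1 + ∫⁻ ω, ENNReal.ofReal (X ω ^ 2) ∂P) / 2 := by
        rw [lintegral_add_left measurable_const]
        simp [measure_univ]
    _ ≤ (1 + ENNReal.ofReal v) / 2 := by
        gcongr
        exact lintegral_sq_le_of_cos hX h


/-- anti-concentration -/
lemma anticonc {X : Ω → ℝ} (hX : Measurable X) {v ε : ℝ} (hε : 0 < ε) (hv : 8 * ε ^ 2 ≤ v)
    (h : ∀ s : ℝ, ∫ ω, Real.cos (s * X ω) ∂P = Real.exp (-(s ^ 2 * v) / 2)) :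
    P {ω | |X ω| ≤ ε} ≤ ENNReal.ofReal (9 / 10) := by
  set s : ℝ := 1 / (2 * ε) with hs
  have hspos : 0 < s := by positivity
  set E : Set Ω := {ω | |X ω| ≤ ε} with hE
  have hEmeas : MeasurableSet E := measurableSet_le (hX.abs) measurable_const
  set p : ℝ := (P E).toReal with hp
  have hPfin : P E ≠ ⊤ := measure_ne_top _ _
  have hcosmeas : AEMeasurable (fun ω => Real.cos (s * X ω)) P := by
    exact (Real.measurable_cos.comp (measurable_const.mul hX)).aemeasurable
  have hcosint : Integrable (fun ω => Real.cos (s * X ω)) P :=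
    integrable_of_bdd hcosmeas (C := 1) (fun ω => Real.abs_cos_le_one _)
  -- split integral
  have hsplit : ∫ ω, Real.cos (s * X ω) ∂P
      = (∫ ω in E, Real.cos (s * X ω) ∂P) + ∫ ω in Eᶜ, Real.cos (s * X ω) ∂P :=
    (integral_add_compl hEmeas hcosint).symm
  have hlow1 : (7/8 : ℝ) * p ≤ ∫ ω in E, Real.cos (s * X ω) ∂P := by
    have : ∀ ω ∈ E, (7/8 : ℝ) ≤ Real.cos (s * X ω) := by
      intro ω hω
      have hxe : |X ω| ≤ ε := hω
      have habs : |s * X ω| ≤ 1/2 := by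
        rw [abs_mul, abs_of_pos hspos, hs]
        rw [div_mul_eq_mul_div, one_mul, div_le_div_iff₀ (by positivity) (by norm_num)]
        linarith
      have := Real.one_sub_sq_div_two_le_cos (x := s * X ω)
      have hsq : (s * X ω) ^ 2 ≤ (1/2) ^ 2 := by
        rw [← sq_abs]
        exact pow_le_pow_left₀ (abs_nonneg _) habs 2
      nlinarith
    calc (7/8 : ℝ) * p = ∫ _ω in E, (7/8 : ℝ) ∂P := by
          rw [setIntegral_const, smul_eq_mul, mul_comm]; rfl
      _ ≤ ∫ ω in E, Real.cos (s * X ω) ∂P := by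
          apply setIntegral_mono_on (integrableOn_const (measure_ne_top _ _))
            (hcosint.integrableOn) hEmeas this
  have hlow2 : -(1 - p) ≤ ∫ ω in Eᶜ, Real.cos (s * X ω) ∂P := by
    have hc : (P Eᶜ).toReal = 1 - p := by
      rw [measure_compl hEmeas hPfin, hp]
      rw [ENNReal.toReal_sub_of_le (measure_mono (subset_univ _)) (measure_ne_top _ _)]
      simp [measure_univ]
    calc -(1 - p) = ∫ _ω in Eᶜ, (-1 : ℝ) ∂P := by
          rw [setIntegral_const, smul_eq_mul, measureReal_def, hc]; ring
      _ ≤ ∫ ω in Eᶜ, Real.cos (s * X ω) ∂P := by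
          apply setIntegral_mono_on (integrableOn_const (measure_ne_top _ _))
            (hcosint.integrableOn) hEmeas.compl
          intro ω _
          exact Real.neg_one_le_cos _
  have hup : Real.exp (-(s ^ 2 * v) / 2) ≤ Real.exp (-1) := by
    apply Real.exp_le_exp.2
    have hsv : 2 ≤ s ^ 2 * v := by
      have hs2 : s ^ 2 = 1 / (4 * ε ^ 2) := by rw [hs]; field_simp; ring
      rw [hs2]
      rw [div_mul_eq_mul_div, one_mul, le_div_iff₀ (by positivity)]
      linarith
    linarith
  have hexpneg : Real.exp (-1) ≤ 1/2 := by
    have h2 : (2:ℝ) ≤ Real.exp 1 := by linarith [Real.add_one_le_exp 1]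
    rw [Real.exp_neg, inv_eq_one_div]
    exact one_div_le_one_div_of_le (by norm_num) h2
  have hmain : (15/8 : ℝ) * p - 1 ≤ 1/2 := by
    have := h s
    rw [hsplit] at this
    nlinarith [hlow1, hlow2, hup, hexpneg]
  have hple : p ≤ 9/10 := by linarith
  exact (ENNReal.le_ofReal_iff_toReal_le hPfin (by norm_num)).2 hple

lemma coord_measurable {d : ℕ} {f : Ω → EuclideanSpace ℝ (Fin d)} (hf : Measurable f)
    (i : Fin d) : Measurable fun ω => f ω i :=
  ((PiLp.proj (𝕜 := ℝ) (p := 2) (β := fun _ : Fin d => ℝ) i).continuous.measurable).comp hf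


lemma char_cos {d : ℕ} {T : ℝ} {Hs lam : ℕ → ℝ} {B : ℕ → ℝ → Ω → EuclideanSpace ℝ (Fin d)}
    (hreg : IsRegFBM d T P Hs lam B) {k : ℕ} (ns : Fin k → ℕ) (hns : Function.Injective ns)
    (ts : Fin k → ℝ) (hts : ∀ j, ts j ∈ Set.Icc 0 T) (c : Fin k → ℝ) (i : Fin d) :
    ∫ ω, Real.cos (∑ j, c j * B (ns j) (ts j) ω i) ∂P
      = Real.exp (-(∑ j, c j ^ 2 * fbmCov (Hs (ns j)) (ts j) (ts j)) / 2) := by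
  have key := hreg.charFun k ns ts (fun j => EuclideanSpace.single i (c j)) hts
  set r : Ω → ℝ := fun ω => ∑ j, c j * B (ns j) (ts j) ω i with hr
  have hL : ∀ ω, (∑ j, (inner ℝ (EuclideanSpace.single i (c j))
      (B (ns j) (ts j) ω) : ℝ)) = r ω := by
    intro ω
    apply Finset.sum_congr rfl
    intro j _
    rw [EuclideanSpace.inner_single_left]
    simp
  have hS : (∑ j, ∑ j', if ns j = ns j' then
        (((inner ℝ (EuclideanSpace.single i (c j)) (EuclideanSpace.single i (c j')) : ℝ)
          * fbmCov (Hs (ns j)) (ts j) (ts j') : ℝ) : ℂ) else 0)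
      = ((∑ j, c j ^ 2 * fbmCov (Hs (ns j)) (ts j) (ts j) : ℝ) : ℂ) := by
    rw [Complex.ofReal_sum]
    apply Finset.sum_congr rfl
    intro j _
    have h1 : ∀ j' : Fin k, (if ns j = ns j' then
        (((inner ℝ (EuclideanSpace.single i (c j)) (EuclideanSpace.single i (c j')) : ℝ)
          * fbmCov (Hs (ns j)) (ts j) (ts j') : ℝ) : ℂ) else 0)
        = (if j = j' then
        (((inner ℝ (EuclideanSpace.single i (c j)) (EuclideanSpace.single i (c j')) : ℝ)
          * fbmCov (Hs (ns j)) (ts j) (ts j') : ℝ) : ℂ) else 0) := by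
      intro j'
      congr 1
      exact propext ⟨fun h => hns h, fun h => by rw [h]⟩
    rw [Finset.sum_congr rfl (fun j' _ => h1 j'), Finset.sum_ite_eq Finset.univ j _]
    simp only [Finset.mem_univ, if_true]
    have hinner : (inner ℝ (EuclideanSpace.single i (c j))
        (EuclideanSpace.single i (c j)) : ℝ) = c j ^ 2 := by
      rw [EuclideanSpace.inner_single_left, EuclideanSpace.single_apply]
      simp [sq]
    rw [hinner]
  simp only [hL] at key
  rw [hS] at key
  have hRHS : Complex.exp (-(1 / 2 : ℂ) *
      ((∑ j, c j ^ 2 * fbmCov (Hs (ns j)) (ts j) (ts j) : ℝ) : ℂ))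
      = ((Real.exp (-(∑ j, c j ^ 2 * fbmCov (Hs (ns j)) (ts j) (ts j)) / 2) : ℝ) : ℂ) := by
    rw [show (-(1 / 2 : ℂ) * ((∑ j, c j ^ 2 * fbmCov (Hs (ns j)) (ts j) (ts j) : ℝ) : ℂ))
      = ((-(∑ j, c j ^ 2 * fbmCov (Hs (ns j)) (ts j) (ts j)) / 2 : ℝ) : ℂ) by push_cast; ring,
      Complex.ofReal_exp]
  rw [hRHS] at key
  have hrmeas : Measurable r := by
    apply Finset.measurable_sum
    intro j _
    exact (coord_measurable (hreg.meas (ns j) (ts j)) i).const_mul _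
  have hint : Integrable (fun ω => Complex.exp (Complex.I * (r ω : ℂ))) P := by
    refine Integrable.mono' (integrable_const 1) ?_ ?_
    · exact (Complex.measurable_exp.comp
        ((Complex.measurable_ofReal.comp hrmeas).const_mul Complex.I)).aestronglyMeasurable
    · filter_upwards with ω
      rw [Complex.norm_exp]
      simp
  have h2 := integral_re (𝕜 := ℂ) hint
  simp only [RCLike.re_to_complex] at h2
  have h3 := congrArg Complex.re key
  rw [← h2, Complex.ofReal_re] at h3
  rw [← h3]
  apply integral_congr_ae
  filter_upwards with ω
  rw [mul_comm]
  exact (Complex.exp_ofReal_mul_I_re (r ω)).symm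

section Pieces
variable {d : ℕ} {T : ℝ} {Hs lam : ℕ → ℝ} {B : ℕ → ℝ → Ω → EuclideanSpace ℝ (Fin d)}

omit [IsProbabilityMeasure P] in
lemma fbmCov_self {H : ℝ} (hH : H ≠ 0) (t : ℝ) : fbmCov H t t = t ^ (2 * H) := by
  unfold fbmCov
  rw [sub_self, abs_zero, Real.zero_rpow (by simpa using hH)]
  ring

lemma rpow_le_max {t e : ℝ} (ht0 : 0 ≤ t) (htT : t ≤ T) (he0 : 0 ≤ e) (he1 : e ≤ 1) :
    t ^ e ≤ max 1 T := by
  rcases le_or_gt t 1 with h | h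
  · exact le_trans (Real.rpow_le_one ht0 h he0) (le_max_left _ _)
  · calc t ^ e ≤ t ^ (1:ℝ) := Real.rpow_le_rpow_of_exponent_le h.le he1
      _ = t := Real.rpow_one t
      _ ≤ max 1 T := le_trans htT (le_max_right _ _)

lemma hurst_exp_mem (hreg : IsRegFBM d T P Hs lam B) (n : ℕ) :
    0 ≤ 2 * Hs n ∧ 2 * Hs n ≤ 1 ∧ 2 * Hs n ≠ 0 := by
  obtain ⟨h1, h2⟩ := hreg.Hmem n
  exact ⟨by linarith, by linarith, by positivity⟩

/-- characteristic function of a single coordinate of a single fBm -/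
lemma char_single (hreg : IsRegFBM d T P Hs lam B) (n : ℕ) {t : ℝ} (ht : t ∈ Set.Icc 0 T)
    (i : Fin d) (s : ℝ) :
    ∫ ω, Real.cos (s * B n t ω i) ∂P = Real.exp (-(s ^ 2 * t ^ (2 * Hs n)) / 2) := by
  have key := char_cos hreg (k := 1) (fun _ => n) (fun a b _ => Subsingleton.elim a b)
    (fun _ => t) (fun _ => ht) (fun _ => s) i
  simp only [Fin.sum_univ_one] at key
  rwa [fbmCov_self (ne_of_gt (hreg.Hmem n).1) t] at key

end Pieces

section More
variable {d : ℕ} {T : ℝ} {Hs lam : ℕ → ℝ} {B : ℕ → ℝ → Ω → EuclideanSpace ℝ (Fin d)}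

omit [IsProbabilityMeasure P] in
lemma euclid_norm_le_sum_abs (x : EuclideanSpace ℝ (Fin d)) : ‖x‖ ≤ ∑ i, |x i| := by
  have hx : x = ∑ i, (x i) • EuclideanSpace.single i (1:ℝ) := by
    have := (EuclideanSpace.basisFun (Fin d) ℝ).sum_repr x
    simp only [EuclideanSpace.basisFun_repr, EuclideanSpace.basisFun_apply] at this
    exact this.symm
  calc ‖x‖ = ‖∑ i, (x i) • EuclideanSpace.single i (1:ℝ)‖ := by rw [← hx]
    _ ≤ ∑ i, ‖(x i) • EuclideanSpace.single i (1:ℝ)‖ := norm_sum_le _ _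
    _ = ∑ i, |x i| := by
        apply Finset.sum_congr rfl
        intro i _
        rw [norm_smul, EuclideanSpace.norm_single]
        simp [Real.norm_eq_abs]

/-- a.s. absolute summability of the series defining `regFBM` -/
lemma as_summable (hreg : IsRegFBM d T P Hs lam B) {t : ℝ} (ht : t ∈ Set.Icc 0 T) :
    ∀ᵐ ω ∂P, Summable fun n => ‖lam n • B n t ω‖ := by
  set M : ℝ := max 1 T with hM
  have hM0 : 0 ≤ M := le_trans zero_le_one (le_max_left _ _)
  set c : ℝ≥0∞ := (1 + ENNReal.ofReal M) / 2 with hc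
  have hcne : c ≠ ∞ := by
    rw [hc]
    simp [ENNReal.add_ne_top, ENNReal.div_eq_top]
  -- coordinatewise moment bound
  have hcoord : ∀ n (i : Fin d), ∫⁻ ω, ENNReal.ofReal |B n t ω i| ∂P ≤ c := by
    intro n i
    have hchar : ∀ s : ℝ, ∫ ω, Real.cos (s * B n t ω i) ∂P
        = Real.exp (-(s ^ 2 * t ^ (2 * Hs n)) / 2) := fun s => char_single hreg n ht i s
    have h1 := lintegral_abs_le_of_cos
      ((coord_measurable (hreg.meas n t) i).aemeasurable) hchar
    refine h1.trans ?_
    rw [hc]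
    gcongr
    exact rpow_le_max ht.1 ht.2 (hurst_exp_mem hreg n).1 (hurst_exp_mem hreg n).2.1
  -- norm moment bound
  have hnorm : ∀ n, ∫⁻ ω, ENNReal.ofReal ‖lam n • B n t ω‖ ∂P
      ≤ ENNReal.ofReal |lam n| * (d * c) := by
    intro n
    have hle : ∀ ω, ENNReal.ofReal ‖lam n • B n t ω‖
        ≤ ENNReal.ofReal |lam n| * ∑ i, ENNReal.ofReal |B n t ω i| := by
      intro ω
      rw [← ENNReal.ofReal_sum_of_nonneg (fun i _ => abs_nonneg _),
        ← ENNReal.ofReal_mul (abs_nonneg _)]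
      apply ENNReal.ofReal_le_ofReal
      rw [norm_smul, Real.norm_eq_abs]
      exact mul_le_mul_of_nonneg_left (euclid_norm_le_sum_abs _) (abs_nonneg _)
    calc ∫⁻ ω, ENNReal.ofReal ‖lam n • B n t ω‖ ∂P
        ≤ ∫⁻ ω, ENNReal.ofReal |lam n| * ∑ i, ENNReal.ofReal |B n t ω i| ∂P :=
          lintegral_mono hle
      _ = ENNReal.ofReal |lam n| * ∫⁻ ω, ∑ i, ENNReal.ofReal |B n t ω i| ∂P :=
          lintegral_const_mul' _ _ ENNReal.ofReal_ne_top
      _ = ENNReal.ofReal |lam n| * ∑ i, ∫⁻ ω, ENNReal.ofReal |B n t ω i| ∂P := by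
          congr 1
          apply lintegral_finset_sum
          intro i _
          exact ((coord_measurable (hreg.meas n t) i).abs).ennreal_ofReal
      _ ≤ ENNReal.ofReal |lam n| * ∑ _i : Fin d, c := by
          gcongr with i
          exact hcoord n i
      _ = ENNReal.ofReal |lam n| * (d * c) := by
          rw [Finset.sum_const, Finset.card_univ, Fintype.card_fin, nsmul_eq_mul]
  -- total bound
  have htotal : ∫⁻ ω, ∑' n, ENNReal.ofReal ‖lam n • B n t ω‖ ∂P < ∞ := by
    have hms : ∀ n, Measurable fun ω => ENNReal.ofReal ‖lam n • B n t ω‖ := fun n =>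
      (((measurable_const_smul (lam n)).comp (hreg.meas n t)).norm).ennreal_ofReal
    rw [lintegral_tsum (fun n => (hms n).aemeasurable)]
    calc ∑' n, ∫⁻ ω, ENNReal.ofReal ‖lam n • B n t ω‖ ∂P
        ≤ ∑' n, ENNReal.ofReal |lam n| * (d * c) := ENNReal.tsum_le_tsum hnorm
      _ = (∑' n, ENNReal.ofReal |lam n|) * (d * c) := ENNReal.tsum_mul_right
      _ < ∞ := by
          apply ENNReal.mul_lt_top
          · rw [← ENNReal.ofReal_tsum_of_nonneg (fun n => abs_nonneg _) hreg.lam_summable]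
            exact ENNReal.ofReal_lt_top
          · exact ENNReal.mul_lt_top (by simp) hcne.lt_top
  have hae : ∀ᵐ ω ∂P, ∑' n, ENNReal.ofReal ‖lam n • B n t ω‖ < ∞ :=
    ae_lt_top' (AEMeasurable.ennreal_tsum (fun n =>
      ((((measurable_const_smul (lam n)).comp (hreg.meas n t)).norm).ennreal_ofReal).aemeasurable))
      htotal.ne
  filter_upwards [hae] with ω hω
  have hsum := ENNReal.summable_toReal hω.ne
  apply hsum.congr
  intro n
  rw [ENNReal.toReal_ofReal (norm_nonneg _)]
end More

section Char
variable {d : ℕ} {T : ℝ} {Hs lam : ℕ → ℝ} {B : ℕ → ℝ → Ω → EuclideanSpace ℝ (Fin d)}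

/-- characteristic function of partial sums -/
lemma char_partial (hreg : IsRegFBM d T P Hs lam B) {t : ℝ} (ht : t ∈ Set.Icc 0 T)
    (i : Fin d) (s : ℝ) (N : ℕ) :
    ∫ ω, Real.cos (s * ∑ n ∈ Finset.range N, lam n * B n t ω i) ∂P
      = Real.exp (-(s ^ 2 * ∑ n ∈ Finset.range N, lam n ^ 2 * t ^ (2 * Hs n)) / 2) := by
  have key := char_cos hreg (k := N) (fun j => (j : ℕ)) Fin.val_injective
    (fun _ => t) (fun _ => ht) (fun j => s * lam (j : ℕ)) i
  have hL : ∀ ω, (∑ j : Fin N, (s * lam (j:ℕ)) * B (j:ℕ) t ω i)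
      = s * ∑ n ∈ Finset.range N, lam n * B n t ω i := by
    intro ω
    rw [Finset.mul_sum, ← Fin.sum_univ_eq_sum_range]
    exact Finset.sum_congr rfl fun j _ => by ring
  have hR : (∑ j : Fin N, (s * lam (j:ℕ)) ^ 2 * fbmCov (Hs (j:ℕ)) t t)
      = s ^ 2 * ∑ n ∈ Finset.range N, lam n ^ 2 * t ^ (2 * Hs n) := by
    rw [Finset.mul_sum, ← Fin.sum_univ_eq_sum_range]
    refine Finset.sum_congr rfl fun j _ => ?_
    rw [fbmCov_self (ne_of_gt (hreg.Hmem (j:ℕ)).1) t]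
    ring
  simp only [hL, hR, neg_div] at key
  rw [key, neg_div]
end Char

section Char2
variable {d : ℕ} {T : ℝ} {Hs lam : ℕ → ℝ} {B : ℕ → ℝ → Ω → EuclideanSpace ℝ (Fin d)}

lemma V_summable (hreg : IsRegFBM d T P Hs lam B) {t : ℝ} (ht : t ∈ Set.Icc 0 T) :
    Summable fun n => lam n ^ 2 * t ^ (2 * Hs n) := by
  have hle : ∀ n, lam n ^ 2 * t ^ (2 * Hs n) ≤ |lam n| * ((∑' m, |lam m|) * max 1 T) := by
    intro n
    have h1 : |lam n| ≤ ∑' m, |lam m| := Summable.le_tsum hreg.lam_summable n (fun j _ => abs_nonneg _)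
    have h2 : t ^ (2 * Hs n) ≤ max 1 T :=
      rpow_le_max ht.1 ht.2 (hurst_exp_mem hreg n).1 (hurst_exp_mem hreg n).2.1
    have h3 : lam n ^ 2 = |lam n| * |lam n| := by rw [← abs_mul, abs_mul_self]; ring
    have h4 : (0:ℝ) ≤ t ^ (2 * Hs n) := Real.rpow_nonneg ht.1 _
    have h5 : (0:ℝ) ≤ |lam n| := abs_nonneg _
    rw [h3, mul_assoc]
    apply mul_le_mul_of_nonneg_left _ h5
    exact mul_le_mul h1 h2 h4 (le_trans h5 h1)
  exact Summable.of_nonneg_of_le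
    (fun n => mul_nonneg (sq_nonneg _) (Real.rpow_nonneg ht.1 _)) hle
    (hreg.lam_summable.mul_right _)

/-- a.s. convergence of coordinate partial sums to the coordinate of regFBM -/
lemma as_tendsto_coord (hreg : IsRegFBM d T P Hs lam B) {t : ℝ} (ht : t ∈ Set.Icc 0 T)
    (i : Fin d) :
    ∀ᵐ ω ∂P, Tendsto (fun N => ∑ n ∈ Finset.range N, lam n * B n t ω i) atTop
      (𝓝 (regFBM lam B t ω i)) := by
  filter_upwards [as_summable hreg ht] with ω hω
  have hsum : Summable fun n => lam n • B n t ω := Summable.of_norm hω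
  have hhas : HasSum (fun n => lam n • B n t ω) (regFBM lam B t ω) := hsum.hasSum
  have h1 : Tendsto (fun N => ∑ n ∈ Finset.range N, lam n • B n t ω) atTop
      (𝓝 (regFBM lam B t ω)) := hhas.tendsto_sum_nat
  have h2 := ((PiLp.proj (𝕜 := ℝ) (p := 2) (β := fun _ : Fin d => ℝ) i).continuous.tendsto
    (regFBM lam B t ω)).comp h1
  simp only [Function.comp_def] at h2
  convert h2 using 2 with N
  rw [map_sum (PiLp.proj (𝕜 := ℝ) (p := 2) (β := fun _ : Fin d => ℝ) i)]
  rfl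
  rfl

lemma coord_aemeasurable (hreg : IsRegFBM d T P Hs lam B) {t : ℝ} (ht : t ∈ Set.Icc 0 T)
    (i : Fin d) : AEMeasurable (fun ω => regFBM lam B t ω i) P := by
  apply aemeasurable_of_tendsto_metrizable_ae atTop
    (f := fun N ω => ∑ n ∈ Finset.range N, lam n * B n t ω i)
    (fun N => (Finset.measurable_sum _ (fun n _ =>
      (coord_measurable (hreg.meas n t) i).const_mul _)).aemeasurable)
  exact as_tendsto_coord hreg ht i

/-- characteristic function of one coordinate of the regularizing fBm -/
lemma char_regFBM (hreg : IsRegFBM d T P Hs lam B) {t : ℝ} (ht : t ∈ Set.Icc 0 T)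
    (i : Fin d) (s : ℝ) :
    ∫ ω, Real.cos (s * regFBM lam B t ω i) ∂P
      = Real.exp (-(s ^ 2 * ∑' n, lam n ^ 2 * t ^ (2 * Hs n)) / 2) := by
  set F : ℕ → Ω → ℝ := fun N ω => Real.cos (s * ∑ n ∈ Finset.range N, lam n * B n t ω i) with hF
  have hFmeas : ∀ N, AEStronglyMeasurable (F N) P := by
    intro N
    apply Measurable.aestronglyMeasurable
    exact Real.measurable_cos.comp (measurable_const.mul
      (Finset.measurable_sum _ (fun n _ => (coord_measurable (hreg.meas n t) i).const_mul _)))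
  have hbound : ∀ N, ∀ᵐ ω ∂P, ‖F N ω‖ ≤ (1:ℝ) := by
    intro N
    filter_upwards with ω
    rw [hF, Real.norm_eq_abs]
    exact Real.abs_cos_le_one _
  have hlim : ∀ᵐ ω ∂P, Tendsto (fun N => F N ω) atTop
      (𝓝 (Real.cos (s * regFBM lam B t ω i))) := by
    filter_upwards [as_tendsto_coord hreg ht i] with ω hω
    exact (Real.continuous_cos.tendsto _).comp ((tendsto_const_nhds.mul hω).congr (fun N => rfl))
  have hDC := tendsto_integral_of_dominated_convergence (fun _ => (1:ℝ)) hFmeas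
    (integrable_const 1) hbound hlim
  have hVals : ∀ N, ∫ ω, F N ω ∂P
      = Real.exp (-(s ^ 2 * ∑ n ∈ Finset.range N, lam n ^ 2 * t ^ (2 * Hs n)) / 2) :=
    fun N => char_partial hreg ht i s N
  have hVlim : Tendsto (fun N => ∑ n ∈ Finset.range N, lam n ^ 2 * t ^ (2 * Hs n)) atTop
      (𝓝 (∑' n, lam n ^ 2 * t ^ (2 * Hs n))) := (V_summable hreg ht).hasSum.tendsto_sum_nat
  have hRlim : Tendsto (fun N => ∫ ω, F N ω ∂P) atTop
      (𝓝 (Real.exp (-(s ^ 2 * ∑' n, lam n ^ 2 * t ^ (2 * Hs n)) / 2))) := by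
    simp only [hVals]
    apply Tendsto.comp (Real.continuous_exp.tendsto _)
    apply Tendsto.div_const
    exact (tendsto_const_nhds.mul hVlim).neg
  exact tendsto_nhds_unique hDC hRlim

/-- regFBM vanishes a.s. at time 0 -/
lemma regFBM_zero (hreg : IsRegFBM d T P Hs lam B) (hT : 0 ≤ T) :
    ∀ᵐ ω ∂P, regFBM lam B 0 ω = 0 := by
  have h0 : (0:ℝ) ∈ Set.Icc 0 T := ⟨le_refl _, hT⟩
  have hzero : ∀ n (i : Fin d), ∀ᵐ ω ∂P, B n 0 ω i = 0 := by
    intro n i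
    have hchar : ∀ s' : ℝ, ∫ ω, Real.cos (s' * B n 0 ω i) ∂P
        = Real.exp (-(s' ^ 2 * (0:ℝ)) / 2) := by
      intro s'
      have := char_single hreg n h0 i s'
      rwa [Real.zero_rpow (by simpa using ne_of_gt (hreg.Hmem n).1 : 2 * Hs n ≠ 0)] at this
    have hle := lintegral_sq_le_of_cos
      ((coord_measurable (hreg.meas n 0) i).aemeasurable) hchar
    rw [ENNReal.ofReal_zero, le_zero_iff] at hle
    have := (lintegral_eq_zero_iff'
      ((coord_measurable (hreg.meas n 0) i).pow_const 2).ennreal_ofReal.aemeasurable).1 hle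
    filter_upwards [this] with ω hω
    have : ENNReal.ofReal (B n 0 ω i ^ 2) = 0 := hω
    rw [ENNReal.ofReal_eq_zero] at this
    nlinarith [sq_nonneg (B n 0 ω i), this]
  have hall : ∀ᵐ ω ∂P, ∀ n, ∀ i : Fin d, B n 0 ω i = 0 := by
    rw [ae_all_iff]
    intro n
    rw [ae_all_iff]
    exact hzero n
  filter_upwards [hall] with ω hω
  have : ∀ n, lam n • B n 0 ω = 0 := by
    intro n
    have hB : B n 0 ω = 0 := by
      ext i
      exact hω n i
    rw [hB, smul_zero]
  unfold regFBM
  simp only [this, tsum_zero]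

end Char2


end Aux

open Topology in
/-- `𝔹^H` admits no Hölder continuous modification of any positive
order: for every `γ ∈ (0,1]` there is no process `Y` with `P(Y_t = 𝔹^H_t) = 1` for
every `t ∈ [0,T]` whose sample paths are a.s. `γ`-Hölder continuous on `[0,T]`. -/
theorem statement7 (d : ℕ) (hd : 1 ≤ d) (T : ℝ) (hT : 0 < T)
    {Ω : Type*} [MeasurableSpace Ω] (P : Measure Ω) [IsProbabilityMeasure P]
    (Hs lam : ℕ → ℝ) (B : ℕ → ℝ → Ω → EuclideanSpace ℝ (Fin d))
    (hreg : IsRegFBM d T P Hs lam B) :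
    ∀ γ : ℝ, 0 < γ → γ ≤ 1 →
      ¬ ∃ Y : ℝ → Ω → EuclideanSpace ℝ (Fin d),
          (∀ t ∈ Set.Icc (0 : ℝ) T, ∀ᵐ ω ∂P, Y t ω = regFBM lam B t ω) ∧
          (∀ᵐ ω ∂P, ∃ C : ℝ≥0,
            HolderOnWith C γ.toNNReal (fun t => Y t ω) (Set.Icc (0 : ℝ) T)) := by
  intro γ hγ0 hγ1
  rintro ⟨Y, hmod, hHold⟩
  set i0 : Fin d := ⟨0, hd⟩ with hi0
  -- pick m with Hs m < γ and lam m ≠ 0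
  obtain ⟨N₀, hN₀⟩ := (hreg.Hlim.eventually (eventually_lt_nhds hγ0)).exists_forall_of_atTop
  obtain ⟨m, hmlam, hmN⟩ := hreg.lam_inf.exists_gt N₀
  have hHm : Hs m < γ := hN₀ m hmN.le
  have hlm : lam m ≠ 0 := hmlam
  -- the sequence of times
  set h : ℕ → ℝ := fun j => T / 2 ^ j with hh
  have hpos : ∀ j, 0 < h j := fun j => by positivity
  have hleT : ∀ j, h j ≤ T := fun j => by
    rw [hh]
    apply div_le_self hT.le
    exact one_le_pow₀ (by norm_num)
  have hmem : ∀ j, h j ∈ Set.Icc (0:ℝ) T := fun j => ⟨(hpos j).le, hleT j⟩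
  have h0mem : (0:ℝ) ∈ Set.Icc (0:ℝ) T := ⟨le_refl _, hT.le⟩
  have htend : Tendsto h atTop (𝓝 0) := by
    rw [hh]
    simp only [div_eq_mul_inv, ← inv_pow]
    simpa using tendsto_const_nhds.mul
      (tendsto_pow_atTop_nhds_zero_of_lt_one (by norm_num) (by norm_num : (2:ℝ)⁻¹ < 1))
  -- variance
  set V : ℕ → ℝ := fun j => ∑' n, lam n ^ 2 * (h j) ^ (2 * Hs n) with hV
  have hVlb : ∀ j, lam m ^ 2 * (h j) ^ (2 * Hs m) ≤ V j := fun j =>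
    Summable.le_tsum (V_summable hreg (hmem j)) m
      (fun n _ => mul_nonneg (sq_nonneg _) (Real.rpow_nonneg (hpos j).le _))
  -- measurable versions of the coordinates
  have hZae : ∀ j, AEMeasurable (fun ω => regFBM lam B (h j) ω i0) P :=
    fun j => coord_aemeasurable hreg (hmem j) i0
  set W : ℕ → Ω → ℝ := fun j => (hZae j).mk _ with hW
  have hWmeas : ∀ j, Measurable (W j) := fun j => (hZae j).measurable_mk
  have hWeq : ∀ j, (fun ω => regFBM lam B (h j) ω i0) =ᵐ[P] W j := fun j => (hZae j).ae_eq_mk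
  -- events
  set F : ℕ → Set Ω := fun K => ⋂ j, {ω | |W j ω| ≤ ((K:ℝ) + 1) * (h j) ^ γ} with hF
  have hFmeas : ∀ K, MeasurableSet (F K) := fun K =>
    MeasurableSet.iInter fun j => measurableSet_le (hWmeas j).abs measurable_const
  have hFmono : Monotone F := by
    intro K K' hKK' ω hω
    simp only [hF, Set.mem_iInter, Set.mem_setOf_eq] at hω ⊢
    intro j
    have h1 : |W j ω| ≤ ((K:ℝ) + 1) * h j ^ γ := hω j
    have h2 : ((K:ℝ) + 1) * h j ^ γ ≤ ((K':ℝ) + 1) * h j ^ γ := by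
      apply mul_le_mul_of_nonneg_right _ (Real.rpow_nonneg (hpos j).le _)
      have : (K:ℝ) ≤ (K':ℝ) := by exact_mod_cast hKK'
      linarith
    exact le_trans h1 h2
  -- a.s. covering
  have hcover : ∀ᵐ ω ∂P, ω ∈ ⋃ K, F K := by
    filter_upwards [hHold, ae_all_iff.2 fun j => hmod (h j) (hmem j), hmod 0 h0mem,
      regFBM_zero hreg hT.le, ae_all_iff.2 hWeq] with ω hHo hYj hY0 hR0 hWω
    obtain ⟨C, hC⟩ := hHo
    refine Set.mem_iUnion.2 ⟨Nat.ceil (C:ℝ), ?_⟩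
    rw [hF, Set.mem_iInter]
    intro j
    have hedist := hC.edist_le (hmem j) h0mem
    rw [hYj j, hY0, hR0] at hedist
    have hrd : edist (regFBM lam B (h j) ω) (0 : EuclideanSpace ℝ (Fin d))
        = ENNReal.ofReal ‖regFBM lam B (h j) ω‖ := by
      rw [edist_dist, dist_zero_right]
    have hre : edist (h j) (0:ℝ) = ENNReal.ofReal (h j) := by
      rw [edist_dist, Real.dist_eq, sub_zero, abs_of_pos (hpos j)]
    rw [hrd, hre, ENNReal.ofReal_rpow_of_pos (hpos j),
      Real.coe_toNNReal γ hγ0.le] at hedist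
    have hC' : (C : ℝ≥0∞) = ENNReal.ofReal (C : ℝ) := (ENNReal.ofReal_coe_nnreal).symm
    rw [hC', ← ENNReal.ofReal_mul C.coe_nonneg] at hedist
    have hnorm : ‖regFBM lam B (h j) ω‖ ≤ (C:ℝ) * (h j) ^ γ := by
      have := (ENNReal.ofReal_le_ofReal_iff
        (mul_nonneg C.coe_nonneg (Real.rpow_nonneg (hpos j).le _))).1 hedist
      exact this
    have hcoord : |regFBM lam B (h j) ω i0| ≤ ‖regFBM lam B (h j) ω‖ := by
      have := abs_real_inner_le_norm (EuclideanSpace.single i0 (1:ℝ))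
        (regFBM lam B (h j) ω)
      rw [EuclideanSpace.inner_single_left, EuclideanSpace.norm_single] at this
      simpa using this
    rw [Set.mem_setOf_eq, ← hWω j]
    calc |regFBM lam B (h j) ω i0| ≤ (C:ℝ) * (h j) ^ γ := le_trans hcoord hnorm
      _ ≤ ((Nat.ceil (C:ℝ) : ℝ) + 1) * (h j) ^ γ := by
          apply mul_le_mul_of_nonneg_right _ (Real.rpow_nonneg (hpos j).le _)
          calc (C:ℝ) ≤ (Nat.ceil (C:ℝ) : ℝ) := Nat.le_ceil _
            _ ≤ (Nat.ceil (C:ℝ) : ℝ) + 1 := by linarith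
  -- P(⋃ F K) = 1
  have hUnion : P (⋃ K, F K) = 1 := by
    apply le_antisymm prob_le_one
    calc (1:ℝ≥0∞) = P Set.univ := (measure_univ).symm
      _ ≤ P (⋃ K, F K) := by
          apply measure_mono_ae
          filter_upwards [hcover] with ω hω _
          exact hω
  have hSup : (⨆ K, P (F K)) = 1 := by
    rw [← hUnion]
    exact (Directed.measure_iUnion (hFmono.directed_le)).symm
  have hexK : ∃ K, ENNReal.ofReal (9/10) < P (F K) := by
    rw [← lt_iSup_iff, hSup]
    exact ENNReal.ofReal_lt_one.2 (by norm_num)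
  obtain ⟨K, hK⟩ := hexK
  -- choose j with enough variance
  have hexp_pos : 0 < γ * 2 - 2 * Hs m := by linarith
  have htend2 : Tendsto (fun j => (h j) ^ (γ * 2 - 2 * Hs m)) atTop (𝓝 0) := by
    have hcont : ContinuousAt (fun x : ℝ => x ^ (γ * 2 - 2 * Hs m)) 0 :=
      (Real.continuousAt_rpow_const 0 _ (Or.inr hexp_pos.le))
    have := hcont.tendsto.comp htend
    rwa [Real.zero_rpow (ne_of_gt hexp_pos)] at this
  have hlim2 : ∀ᶠ j in atTop,
      (h j) ^ (γ * 2 - 2 * Hs m) < lam m ^ 2 / (8 * (((K:ℝ) + 1)) ^ 2) := by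
    apply htend2.eventually_lt_const
    positivity
  obtain ⟨j, hj⟩ := hlim2.exists
  -- variance bound : 8 ε² ≤ V j  with ε = (K+1) (h j)^γ
  set ε : ℝ := ((K:ℝ) + 1) * (h j) ^ γ with hε
  have hεpos : 0 < ε := by
    apply mul_pos (by positivity)
    exact Real.rpow_pos_of_pos (hpos j) _
  have hvar : 8 * ε ^ 2 ≤ V j := by
    have h1 : ε ^ 2 = (((K:ℝ) + 1)) ^ 2 * (h j) ^ (γ * 2) := by
      rw [hε, mul_pow, ← Real.rpow_natCast ((h j) ^ γ) 2, ← Real.rpow_mul (hpos j).le]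
      norm_num
    have h2 : (h j) ^ (γ * 2) = (h j) ^ (2 * Hs m) * (h j) ^ (γ * 2 - 2 * Hs m) := by
      rw [← Real.rpow_add (hpos j)]
      ring_nf
    have h3 : 8 * (((K:ℝ) + 1)) ^ 2 * (h j) ^ (γ * 2 - 2 * Hs m) ≤ lam m ^ 2 := by
      have h8 : (0:ℝ) < 8 * (((K:ℝ) + 1)) ^ 2 := by positivity
      rw [mul_comm, ← le_div_iff₀ h8]
      exact hj.le
    calc 8 * ε ^ 2 = 8 * (((K:ℝ) + 1)) ^ 2 * (h j) ^ (γ * 2 - 2 * Hs m)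
          * (h j) ^ (2 * Hs m) := by rw [h1, h2]; ring
      _ ≤ lam m ^ 2 * (h j) ^ (2 * Hs m) :=
          mul_le_mul_of_nonneg_right h3 (Real.rpow_nonneg (hpos j).le _)
      _ ≤ V j := hVlb j
  -- characteristic function of W j
  have hchar : ∀ s : ℝ, ∫ ω, Real.cos (s * W j ω) ∂P = Real.exp (-(s ^ 2 * V j) / 2) := by
    intro s
    rw [← char_regFBM hreg (hmem j) i0 s]
    apply integral_congr_ae
    filter_upwards [hWeq j] with ω hω
    rw [hω]
  -- contradiction
  have hle : P (F K) ≤ ENNReal.ofReal (9/10) := by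
    calc P (F K) ≤ P {ω | |W j ω| ≤ ε} := by
          apply measure_mono
          intro ω hω
          rw [hF, Set.mem_iInter] at hω
          exact hω j
      _ ≤ ENNReal.ofReal (9/10) := anticonc (hWmeas j) hεpos hvar hchar
  exact absurd (lt_of_lt_of_le hK hle) (lt_irrefl _)
end
end

section
/- Let k ≥ 1 and m_1,…,m_k ∈ ℕ, and set m_{1:j} := m_1 + ⋯ + m_j with m_{1:0} := 0. Let f_i : [0,T] → [0,∞), i = 1,…,m_{1:k}, be integrable functions and t_0 < t in [0,T]. Then Π_{i=0}^{k−1} ∫_{Δ^{m_{i+1}}_{t_0,t}} f_{m_{1:i}+1}(s_{m_{1:i}+1}) ⋯ f_{m_{1:i+1}}(s_{m_{1:i+1}}) ds_{m_{1:i}+1} ⋯ ds_{m_{1:i+1}} = Σ_{σ : σ^{-1} ∈ S(m_1,…,m_k)} ∫_{Δ^{m_{1:k}}_{t_0,t}} Π_{i=1}^{m_{1:k}} f_{σ(i)}(w_i) dw_1 ⋯ dw_{m_{1:k}}. -/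
open MeasureTheory Real Filter Set
open scoped ENNReal NNReal BigOperators Classical

noncomputable section

/-- The `m`-dimensional open simplex `Δ^m_{θ,t}` of increasing tuples. -/
def simplex (m : ℕ) (θ t : ℝ) : Set (Fin m → ℝ) :=
  {s | StrictMono s ∧ ∀ j, s j ∈ Set.Ioo θ t}

/-- Shuffle permutations `S(m_0, …, m_{k-1})` (blocks indexed from `0`):
permutations of `{0, …, m_0 + ⋯ + m_{k-1} - 1}` that are increasing on each of the
consecutive blocks of lengths `m 0, …, m (k-1)`. -/
def IsShuffle (k : ℕ) (m : ℕ → ℕ) (σ : Equiv.Perm (Fin (∑ i ∈ Finset.range k, m i))) :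
    Prop :=
  ∀ i < k, ∀ a b : Fin (∑ i ∈ Finset.range k, m i),
    (∑ l ∈ Finset.range i, m l) ≤ (a : ℕ) → (b : ℕ) < ∑ l ∈ Finset.range (i + 1), m l →
    (a : ℕ) < (b : ℕ) → σ a < σ b

namespace Statement15Aux

lemma measurableSet_simplex (m : ℕ) (θ t : ℝ) : MeasurableSet (simplex m θ t) := by
  have h1 : MeasurableSet {s : Fin m → ℝ | StrictMono s} := by
    have he : {s : Fin m → ℝ | StrictMono s}
        = ⋂ (a : Fin m) (b : Fin m) (_ : a < b), {s : Fin m → ℝ | s a < s b} := by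
      ext s
      simp only [Set.mem_iInter, Set.mem_setOf_eq]
      exact ⟨fun hs a b hab => hs hab, fun hs a b hab => hs a b hab⟩
    rw [he]
    exact MeasurableSet.iInter fun a => MeasurableSet.iInter fun b =>
      MeasurableSet.iInter fun _ =>
        measurableSet_lt (measurable_pi_apply a) (measurable_pi_apply b)
  have h2 : MeasurableSet {s : Fin m → ℝ | ∀ j, s j ∈ Set.Ioo θ t} := by
    have he : {s : Fin m → ℝ | ∀ j, s j ∈ Set.Ioo θ t}
        = ⋂ j, (fun s : Fin m → ℝ => s j) ⁻¹' Set.Ioo θ t := by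
      ext s; simp
    rw [he]
    exact MeasurableSet.iInter fun j => (measurable_pi_apply j) measurableSet_Ioo
  exact h1.inter h2

/-- The set of tuples whose consecutive blocks of lengths `m 0, …, m (k-1)` are
strictly increasing, with all coordinates in `Ioo t₀ t`. -/
def blockSet (k : ℕ) (m : ℕ → ℕ) (t₀ t : ℝ) : Set (Fin (∑ i ∈ Finset.range k, m i) → ℝ) :=
  {x | (∀ j, x j ∈ Set.Ioo t₀ t) ∧
    ∀ i < k, ∀ a b : Fin (∑ i ∈ Finset.range k, m i),
      (∑ l ∈ Finset.range i, m l) ≤ (a : ℕ) → (b : ℕ) < ∑ l ∈ Finset.range (i + 1), m l →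
      (a : ℕ) < (b : ℕ) → x a < x b}

lemma measurableSet_blockSet (k : ℕ) (m : ℕ → ℕ) (t₀ t : ℝ) :
    MeasurableSet (blockSet k m t₀ t) := by
  have h2 : MeasurableSet {x : Fin (∑ i ∈ Finset.range k, m i) → ℝ |
      ∀ j, x j ∈ Set.Ioo t₀ t} := by
    have he : {x : Fin (∑ i ∈ Finset.range k, m i) → ℝ | ∀ j, x j ∈ Set.Ioo t₀ t}
        = ⋂ j, (fun x : Fin (∑ i ∈ Finset.range k, m i) → ℝ => x j) ⁻¹' Set.Ioo t₀ t := by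
      ext x; simp
    rw [he]
    exact MeasurableSet.iInter fun j => (measurable_pi_apply j) measurableSet_Ioo
  have h1 : MeasurableSet {x : Fin (∑ i ∈ Finset.range k, m i) → ℝ |
      ∀ i < k, ∀ a b : Fin (∑ i ∈ Finset.range k, m i),
        (∑ l ∈ Finset.range i, m l) ≤ (a : ℕ) → (b : ℕ) < ∑ l ∈ Finset.range (i + 1), m l →
        (a : ℕ) < (b : ℕ) → x a < x b} := by
    have he : {x : Fin (∑ i ∈ Finset.range k, m i) → ℝ |
        ∀ i < k, ∀ a b : Fin (∑ i ∈ Finset.range k, m i),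
          (∑ l ∈ Finset.range i, m l) ≤ (a : ℕ) → (b : ℕ) < ∑ l ∈ Finset.range (i + 1), m l →
          (a : ℕ) < (b : ℕ) → x a < x b}
        = ⋂ (i : ℕ) (_ : i < k) (a : Fin (∑ i ∈ Finset.range k, m i))
            (b : Fin (∑ i ∈ Finset.range k, m i))
            (_ : (∑ l ∈ Finset.range i, m l) ≤ (a : ℕ))
            (_ : (b : ℕ) < ∑ l ∈ Finset.range (i + 1), m l)
            (_ : (a : ℕ) < (b : ℕ)),
            {x : Fin (∑ i ∈ Finset.range k, m i) → ℝ | x a < x b} := by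
      ext x
      simp only [Set.mem_iInter, Set.mem_setOf_eq]
    rw [he]
    exact MeasurableSet.iInter fun i => MeasurableSet.iInter fun _ =>
      MeasurableSet.iInter fun a => MeasurableSet.iInter fun b =>
      MeasurableSet.iInter fun _ => MeasurableSet.iInter fun _ =>
      MeasurableSet.iInter fun _ =>
        measurableSet_lt (measurable_pi_apply a) (measurable_pi_apply b)
  exact (Set.inter_comm _ _ ▸ h1.inter h2 :)

/-- The permuted-simplex set `A_σ`. -/
def permSet {M : ℕ} (t₀ t : ℝ) (σ : Equiv.Perm (Fin M)) : Set (Fin M → ℝ) :=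
  {x | (fun j => x (σ j)) ∈ simplex M t₀ t}

lemma measurableSet_permSet {M : ℕ} (t₀ t : ℝ) (σ : Equiv.Perm (Fin M)) :
    MeasurableSet (permSet t₀ t σ) := by
  have : permSet t₀ t σ
      = (fun x : Fin M → ℝ => fun j => x (σ j)) ⁻¹' simplex M t₀ t := rfl
  rw [this]
  exact (measurable_pi_lambda _ fun j => measurable_pi_apply (σ j))
    (measurableSet_simplex M t₀ t)

/-- Factorization lemma: the product of the block simplex integrals is the integral
over the block set. -/
lemma lemA (t₀ t : ℝ) (G : ℕ → ℝ → ℝ) (hGint : ∀ c, Integrable (G c)) (m : ℕ → ℕ)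
    (k : ℕ) :
    (∏ i ∈ Finset.range k, ∫ s in simplex (m i) t₀ t, ∏ j : Fin (m i),
        G ((∑ l ∈ Finset.range i, m l) + (j : ℕ)) (s j))
      = ∫ x in blockSet k m t₀ t,
          ∏ j : Fin (∑ i ∈ Finset.range k, m i), G (j : ℕ) (x j) := by
  induction k with
  | zero =>
      haveI : IsEmpty (Fin (∑ i ∈ Finset.range 0, m i)) :=
        ⟨fun j => absurd j.2 (by simp)⟩
      have hb : blockSet 0 m t₀ t = Set.univ := by
        ext x
        simp only [blockSet, Set.mem_setOf_eq, Set.mem_univ, iff_true]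
        exact ⟨fun j => isEmptyElim j, fun i hi => absurd hi (Nat.not_lt_zero i)⟩
      rw [Finset.prod_range_zero, hb, Measure.restrict_univ]
      have hone : ∀ x : Fin (∑ i ∈ Finset.range 0, m i) → ℝ,
          (∏ j : Fin (∑ i ∈ Finset.range 0, m i), G (j : ℕ) (x j)) = 1 := fun x => by
        exact Finset.prod_of_isEmpty _
      rw [integral_congr_ae (Filter.Eventually.of_forall hone), integral_const]
      rw [volume_pi, measureReal_def, Measure.pi_empty_univ]
      simp
  | succ k ih =>
      -- abbreviations
      set N := ∑ i ∈ Finset.range k, m i with hN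
      have hMsucc : (∑ i ∈ Finset.range (k + 1), m i) = N + m k := Finset.sum_range_succ m k
      set E : (Fin N ⊕ Fin (m k)) ≃ Fin (∑ i ∈ Finset.range (k + 1), m i) :=
        finSumFinEquiv.trans (finCongr hMsucc.symm) with hE
      have hEl : ∀ j : Fin N, ((E (Sum.inl j)) : ℕ) = (j : ℕ) := by
        intro j; simp [hE, finSumFinEquiv_apply_left]
      have hEr : ∀ j : Fin (m k), ((E (Sum.inr j)) : ℕ) = N + (j : ℕ) := by
        intro j; simp [hE, finSumFinEquiv_apply_right]
      set Φ : ((Fin N → ℝ) × (Fin (m k) → ℝ)) ≃ᵐ (Fin (∑ i ∈ Finset.range (k + 1), m i) → ℝ) :=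
        (MeasurableEquiv.sumPiEquivProdPi (fun _ : Fin N ⊕ Fin (m k) => ℝ)).symm.trans
          (MeasurableEquiv.piCongrLeft (fun _ => ℝ) E) with hΦdef
      have hΦ : MeasurePreserving Φ volume volume :=
        (volume_measurePreserving_piCongrLeft (fun _ => ℝ) E).comp
          (volume_measurePreserving_sumPiEquivProdPi_symm (fun _ => ℝ))
      have hΦl : ∀ (x : Fin N → ℝ) (y : Fin (m k) → ℝ) (j : Fin N),
          Φ (x, y) (E (Sum.inl j)) = x j := by
        intro x y j
        exact Equiv.piCongrLeft_apply_apply (fun _ => ℝ) E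
          ((MeasurableEquiv.sumPiEquivProdPi (fun _ : Fin N ⊕ Fin (m k) => ℝ)).symm (x, y))
          (Sum.inl j)
      have hΦr : ∀ (x : Fin N → ℝ) (y : Fin (m k) → ℝ) (j : Fin (m k)),
          Φ (x, y) (E (Sum.inr j)) = y j := by
        intro x y j
        exact Equiv.piCongrLeft_apply_apply (fun _ => ℝ) E
          ((MeasurableEquiv.sumPiEquivProdPi (fun _ : Fin N ⊕ Fin (m k) => ℝ)).symm (x, y))
          (Sum.inr j)
      have hNle : ∀ {i : ℕ}, i ≤ k → (∑ l ∈ Finset.range i, m l) ≤ N := by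
        intro i hi
        exact Finset.sum_le_sum_of_subset (Finset.range_subset_range.2 hi)
      have hcase : ∀ c : Fin (∑ i ∈ Finset.range (k + 1), m i),
          (∃ j : Fin N, c = E (Sum.inl j) ∧ (c : ℕ) = (j : ℕ)) ∨
          (∃ j : Fin (m k), c = E (Sum.inr j) ∧ (c : ℕ) = N + (j : ℕ)) := by
        intro c
        rcases hs : E.symm c with j | j
        · left
          refine ⟨j, ?_, ?_⟩
          · rw [← hs, E.apply_symm_apply]
          · rw [← hEl j, ← hs, E.apply_symm_apply]
        · right
          refine ⟨j, ?_, ?_⟩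
          · rw [← hs, E.apply_symm_apply]
          · rw [← hEr j, ← hs, E.apply_symm_apply]
      have hmem : ∀ (x : Fin N → ℝ) (y : Fin (m k) → ℝ),
          Φ (x, y) ∈ blockSet (k + 1) m t₀ t ↔
            x ∈ blockSet k m t₀ t ∧ y ∈ simplex (m k) t₀ t := by
        intro x y
        constructor
        · rintro ⟨hio, hbl⟩
          refine ⟨⟨fun j => ?_, fun i hi a b ha hb hab => ?_⟩,
            ⟨fun a b hab => ?_, fun j => ?_⟩⟩
          · have := hio (E (Sum.inl j)); rwa [hΦl] at this
          · have hblt : (b : ℕ) < N := lt_of_lt_of_le hb (hNle hi)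
            have := hbl i (Nat.lt_succ_of_lt hi) (E (Sum.inl a)) (E (Sum.inl b))
              (by rw [hEl]; exact ha) (by rw [hEl]; exact hb)
              (by rw [hEl, hEl]; exact hab)
            rwa [hΦl, hΦl] at this
          · have hab' : (a : ℕ) < (b : ℕ) := hab
            have := hbl k (Nat.lt_succ_self k) (E (Sum.inr a)) (E (Sum.inr b))
              (by rw [hEr]; exact Nat.le_add_right N a)
              (by rw [hEr, hMsucc]; exact Nat.add_lt_add_left b.2 N)
              (by rw [hEr, hEr]; exact Nat.add_lt_add_left hab' N)
            rwa [hΦr, hΦr] at this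
          · have := hio (E (Sum.inr j)); rwa [hΦr] at this
        · rintro ⟨⟨hxio, hxbl⟩, hysm, hyio⟩
          constructor
          · intro c
            rcases hcase c with ⟨j, rfl, -⟩ | ⟨j, rfl, -⟩
            · rw [hΦl]; exact hxio j
            · rw [hΦr]; exact hyio j
          · intro i hi a b ha hb hab
            rcases Nat.lt_succ_iff_lt_or_eq.1 hi with hik | rfl
            · have hbN : (b : ℕ) < N :=
                lt_of_lt_of_le hb (hNle hik)
              have haN : (a : ℕ) < N := hab.trans hbN
              rcases hcase a with ⟨ja, rfl, hva⟩ | ⟨ja, rfl, hva⟩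
              · rcases hcase b with ⟨jb, rfl, hvb⟩ | ⟨jb, rfl, hvb⟩
                · rw [hΦl, hΦl]
                  exact hxbl i hik ja jb (by omega) (by omega) (by omega)
                · omega
              · omega
            · -- i = k
              rcases hcase a with ⟨ja, rfl, hva⟩ | ⟨ja, rfl, hva⟩
              · exact absurd ha (by omega)
              · rcases hcase b with ⟨jb, rfl, hvb⟩ | ⟨jb, rfl, hvb⟩
                · have : (jb : ℕ) < N := jb.2.trans_le (hNle le_rfl)
                  omega
                · rw [hΦr, hΦr]
                  exact hysm (show ja < jb by
                    rw [Fin.lt_def]; omega)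
      have hprod : ∀ (x : Fin N → ℝ) (y : Fin (m k) → ℝ),
          (∏ c : Fin (∑ i ∈ Finset.range (k + 1), m i), G (c : ℕ) (Φ (x, y) c))
            = (∏ j : Fin N, G (j : ℕ) (x j)) *
              ∏ j : Fin (m k), G (N + (j : ℕ)) (y j) := by
        intro x y
        rw [← E.prod_comp (fun c => G (c : ℕ) (Φ (x, y) c)), Fintype.prod_sum_type]
        congr 1
        · exact Finset.prod_congr rfl fun j _ => by rw [hΦl, hEl]
        · exact Finset.prod_congr rfl fun j _ => by rw [hΦr, hEr]
      rw [Finset.prod_range_succ, ih]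
      calc
        (∫ x in blockSet k m t₀ t, ∏ j : Fin N, G (j : ℕ) (x j)) *
            ∫ s in simplex (m k) t₀ t, ∏ j : Fin (m k), G (N + (j : ℕ)) (s j)
            = (∫ x, Set.indicator (blockSet k m t₀ t)
                  (fun x => ∏ j : Fin N, G (j : ℕ) (x j)) x) *
              ∫ y, Set.indicator (simplex (m k) t₀ t)
                  (fun y => ∏ j : Fin (m k), G (N + (j : ℕ)) (y j)) y := by
              rw [integral_indicator (measurableSet_blockSet k m t₀ t),
                integral_indicator (measurableSet_simplex (m k) t₀ t)]
        _ = ∫ p : (Fin N → ℝ) × (Fin (m k) → ℝ),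
              Set.indicator (blockSet k m t₀ t)
                  (fun x => ∏ j : Fin N, G (j : ℕ) (x j)) p.1 *
              Set.indicator (simplex (m k) t₀ t)
                  (fun y => ∏ j : Fin (m k), G (N + (j : ℕ)) (y j)) p.2 := by
              rw [show (volume : Measure ((Fin N → ℝ) × (Fin (m k) → ℝ))) = Measure.prod volume volume from rfl, integral_prod_mul]
        _ = ∫ p : (Fin N → ℝ) × (Fin (m k) → ℝ),
              Set.indicator (blockSet (k + 1) m t₀ t)
                (fun z => ∏ c : Fin (∑ i ∈ Finset.range (k + 1), m i), G (c : ℕ) (z c))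
                (Φ p) := by
              refine integral_congr_ae (Filter.Eventually.of_forall ?_)
              rintro ⟨x, y⟩
              dsimp only
              by_cases hx : x ∈ blockSet k m t₀ t
              · by_cases hy : y ∈ simplex (m k) t₀ t
                · rw [Set.indicator_of_mem hx, Set.indicator_of_mem hy,
                    Set.indicator_of_mem ((hmem x y).2 ⟨hx, hy⟩), hprod]
                · rw [Set.indicator_of_notMem hy,
                    Set.indicator_of_notMem (fun hc => hy ((hmem x y).1 hc).2), mul_zero]
              · rw [Set.indicator_of_notMem hx,
                  Set.indicator_of_notMem (fun hc => hx ((hmem x y).1 hc).1), zero_mul]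
        _ = ∫ z, Set.indicator (blockSet (k + 1) m t₀ t)
                (fun z => ∏ c : Fin (∑ i ∈ Finset.range (k + 1), m i), G (c : ℕ) (z c))
                z := hΦ.integral_comp' _
        _ = ∫ x in blockSet (k + 1) m t₀ t,
              ∏ j : Fin (∑ i ∈ Finset.range (k + 1), m i), G (j : ℕ) (x j) :=
              integral_indicator (measurableSet_blockSet (k + 1) m t₀ t)

/-- Change-of-variables lemma for a coordinate permutation. -/
lemma lemB (t₀ t : ℝ) (G : ℕ → ℝ → ℝ) {M : ℕ} (σ : Equiv.Perm (Fin M)) :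
    ∫ w in simplex M t₀ t, ∏ i : Fin M, G ((σ i : Fin M) : ℕ) (w i)
      = ∫ x in permSet t₀ t σ, ∏ j : Fin M, G (j : ℕ) (x j) := by
  set T := MeasurableEquiv.piCongrLeft (fun _ : Fin M => ℝ) σ.symm with hTdef
  have hT : MeasurePreserving T volume volume :=
    volume_measurePreserving_piCongrLeft (fun _ => ℝ) σ.symm
  have hTapp : ∀ x : Fin M → ℝ, T x = fun j => x (σ j) := by
    intro x; funext j
    have h := Equiv.piCongrLeft_apply_apply (fun _ : Fin M => ℝ) σ.symm x (σ j)
    rw [Equiv.symm_apply_apply] at h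
    exact h
  calc
    ∫ w in simplex M t₀ t, ∏ i : Fin M, G ((σ i : Fin M) : ℕ) (w i)
        = ∫ w, Set.indicator (simplex M t₀ t)
            (fun w => ∏ i : Fin M, G ((σ i : Fin M) : ℕ) (w i)) w :=
          (integral_indicator (measurableSet_simplex M t₀ t)).symm
    _ = ∫ x, Set.indicator (simplex M t₀ t)
            (fun w => ∏ i : Fin M, G ((σ i : Fin M) : ℕ) (w i)) (T x) :=
          (hT.integral_comp' _).symm
    _ = ∫ x, Set.indicator (permSet t₀ t σ)
            (fun x => ∏ j : Fin M, G (j : ℕ) (x j)) x := by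
          refine integral_congr_ae (Filter.Eventually.of_forall fun x => ?_)
          dsimp only
          rw [hTapp x]
          by_cases hx : (fun j => x (σ j)) ∈ simplex M t₀ t
          · rw [Set.indicator_of_mem hx, Set.indicator_of_mem (show x ∈ permSet t₀ t σ from hx)]
            exact Equiv.prod_comp σ (fun c => G (c : ℕ) (x c))
          · rw [Set.indicator_of_notMem hx,
              Set.indicator_of_notMem (show x ∉ permSet t₀ t σ from hx)]
    _ = ∫ x in permSet t₀ t σ, ∏ j : Fin M, G (j : ℕ) (x j) :=
          integral_indicator (measurableSet_permSet t₀ t σ)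

lemma perm_eq_of_strictMono {M : ℕ} {x : Fin M → ℝ} {σ τ : Equiv.Perm (Fin M)}
    (hσ : StrictMono (fun j => x (σ j))) (hτ : StrictMono (fun j => x (τ j))) : σ = τ := by
  have hinj : Function.Injective x := by
    intro a b hab
    have h2 : σ.symm a = σ.symm b := hσ.injective (show x (σ (σ.symm a)) = x (σ (σ.symm b)) by
      rw [Equiv.apply_symm_apply, Equiv.apply_symm_apply]; exact hab)
    have := congrArg σ h2
    rwa [Equiv.apply_symm_apply, Equiv.apply_symm_apply] at this
  have huniq : x ∘ σ = x ∘ τ :=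
    Tuple.unique_monotone (f := x) (σ := σ) (τ := τ) hσ.monotone hτ.monotone
  exact Equiv.ext fun j => hinj (congrFun huniq j)

lemma ae_injective (M : ℕ) : ∀ᵐ x : Fin M → ℝ, Function.Injective x := by
  rw [ae_iff]
  have hsub : {x : Fin M → ℝ | ¬Function.Injective x}
      ⊆ ⋃ (p : Fin M × Fin M) (_ : p.1 ≠ p.2), {x : Fin M → ℝ | x p.1 = x p.2} := by
    intro x hx
    simp only [Function.Injective, not_forall, Set.mem_setOf_eq] at hx
    obtain ⟨a, b, hab, hne⟩ := hx
    exact Set.mem_iUnion₂.2 ⟨(a, b), hne, hab⟩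
  refine measure_mono_null hsub (measure_iUnion_null fun p => measure_iUnion_null fun hne => ?_)
  set L : (Fin M → ℝ) →ₗ[ℝ] ℝ := (LinearMap.proj p.1 : (Fin M → ℝ) →ₗ[ℝ] ℝ) - (LinearMap.proj p.2 : (Fin M → ℝ) →ₗ[ℝ] ℝ) with hL
  have hset : {x : Fin M → ℝ | x p.1 = x p.2} = ↑(LinearMap.ker L) := by
    ext x
    simp [hL, LinearMap.mem_ker, sub_eq_zero]
  rw [hset]
  refine Measure.addHaar_submodule volume _ ?_
  rw [Ne, LinearMap.ker_eq_top]
  intro hL0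
  have h1 : L (Pi.single p.1 1) = 1 := by
    simp [hL, Pi.single_eq_same, Pi.single_eq_of_ne (Ne.symm hne)]
  rw [hL0] at h1
  simp at h1

lemma shuffle_mem_blockSet {k : ℕ} {m : ℕ → ℕ} {t₀ t : ℝ}
    {σ : Equiv.Perm (Fin (∑ i ∈ Finset.range k, m i))} (hσ : IsShuffle k m σ⁻¹)
    {x : Fin (∑ i ∈ Finset.range k, m i) → ℝ} (hx : x ∈ permSet t₀ t σ) :
    x ∈ blockSet k m t₀ t := by
  obtain ⟨hsm, hio⟩ := hx
  constructor
  · intro c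
    have := hio (σ.symm c)
    simpa using this
  · intro i hi a b ha hb hab
    have h1 : σ⁻¹ a < σ⁻¹ b := hσ i hi a b ha hb hab
    have h2 := hsm h1
    simpa [Equiv.Perm.inv_def, Equiv.apply_symm_apply] using h2

lemma exists_shuffle_of_blockSet {k : ℕ} {m : ℕ → ℕ} {t₀ t : ℝ}
    {x : Fin (∑ i ∈ Finset.range k, m i) → ℝ} (hx : x ∈ blockSet k m t₀ t)
    (hinj : Function.Injective x) :
    ∃ σ : Equiv.Perm (Fin (∑ i ∈ Finset.range k, m i)),
      IsShuffle k m σ⁻¹ ∧ x ∈ permSet t₀ t σ := by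
  obtain ⟨hio, hbl⟩ := hx
  set σ := Tuple.sort x with hσ
  have hmono : Monotone (x ∘ σ) := Tuple.monotone_sort x
  have hsm : StrictMono (fun j => x (σ j)) := by
    refine hmono.strictMono_of_injective ?_
    exact hinj.comp σ.injective
  refine ⟨σ, ?_, ⟨hsm, fun j => hio (σ j)⟩⟩
  intro i hi a b ha hb hab
  have hxab : x a < x b := hbl i hi a b ha hb hab
  have h1 : x (σ (σ⁻¹ a)) < x (σ (σ⁻¹ b)) := by
    simpa [Equiv.Perm.inv_def, Equiv.apply_symm_apply] using hxab
  exact hsm.lt_iff_lt.1 h1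

/-- A.e. equality of coordinatewise products from a.e. equality of the factors. -/
lemma prod_ae_eq {n : ℕ} (F F' : Fin n → ℝ → ℝ)
    (h : ∀ j, F j =ᵐ[(volume : Measure ℝ)] F' j) :
    (fun x : Fin n → ℝ => ∏ j, F j (x j))
      =ᵐ[(volume : Measure (Fin n → ℝ))] fun x => ∏ j, F' j (x j) := by
  have hj : ∀ j, ∀ᵐ x : Fin n → ℝ, F j (x j) = F' j (x j) := by
    intro j
    have hnull : (volume : Measure ℝ) {y : ℝ | ¬F j y = F' j y} = 0 := ae_iff.1 (h j)
    rw [ae_iff]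
    have heq : {x : Fin n → ℝ | ¬F j (x j) = F' j (x j)}
        = (fun x : Fin n → ℝ => x j) ⁻¹' {y | ¬F j y = F' j y} := rfl
    rw [heq, volume_pi]
    exact Measure.pi_eval_preimage_null _ hnull
  filter_upwards [ae_all_iff.2 hj] with x hx
  exact Finset.prod_congr rfl fun j _ => hx j

lemma setIntegral_congr_coords {n : ℕ} (t₀ t : ℝ) (F F' : ℕ → ℝ → ℝ) (ι : Fin n → ℕ)
    (S : Set (Fin n → ℝ)) (hS : MeasurableSet S)
    (hSsub : ∀ x ∈ S, ∀ j, x j ∈ Set.Ioo t₀ t)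
    (hι : ∀ j : Fin n, Set.indicator (Set.Ioo t₀ t) (F (ι j))
      =ᵐ[(volume : Measure ℝ)] F' (ι j)) :
    ∫ x in S, ∏ j, F (ι j) (x j) = ∫ x in S, ∏ j, F' (ι j) (x j) := by
  have step1 : ∫ x in S, ∏ j, F (ι j) (x j)
      = ∫ x in S, ∏ j, Set.indicator (Set.Ioo t₀ t) (F (ι j)) (x j) :=
    setIntegral_congr_fun hS (fun x hx =>
      Finset.prod_congr rfl fun j _ => (Set.indicator_of_mem (hSsub x hx j) _).symm)
  have step2 := prod_ae_eq (fun j => Set.indicator (Set.Ioo t₀ t) (F (ι j)))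
    (fun j => F' (ι j)) hι
  rw [step1]
  exact integral_congr_ae (ae_restrict_of_ae step2)

end Statement15Aux

open Statement15Aux

/-- The shuffle identity: a product of `k` simplex integrals equals
the sum over shuffle permutations of a single simplex integral of the permuted
integrand.  (All indices are `0`-based, so `f i` corresponds to the paper's
`f_{i+1}`.) -/
theorem statement15 (T : ℝ) (hT : 0 < T) (k : ℕ) (hk : 1 ≤ k) (m : ℕ → ℕ)
    (hm : ∀ i < k, 1 ≤ m i) (f : ℕ → ℝ → ℝ)
    (hfint : ∀ i < ∑ l ∈ Finset.range k, m l, IntegrableOn (f i) (Set.Icc 0 T))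
    (hfnn : ∀ i x, 0 ≤ f i x) (t₀ t : ℝ) (ht₀ : t₀ ∈ Set.Icc (0 : ℝ) T)
    (ht : t ∈ Set.Icc (0 : ℝ) T) (h : t₀ < t) :
    (∏ i ∈ Finset.range k,
        ∫ s in simplex (m i) t₀ t, ∏ j : Fin (m i),
          f ((∑ l ∈ Finset.range i, m l) + (j : ℕ)) (s j))
      = ∑ σ ∈ Finset.univ.filter
            (fun σ : Equiv.Perm (Fin (∑ i ∈ Finset.range k, m i)) => IsShuffle k m σ⁻¹),
          ∫ w in simplex (∑ i ∈ Finset.range k, m i) t₀ t,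
            ∏ i : Fin (∑ i ∈ Finset.range k, m i), f ((σ i : ℕ)) (w i) := by
  classical
  -- the truncated, measurable modification `G` of `f`
  have hIoosub : Set.Ioo t₀ t ⊆ Set.Icc 0 T := fun x hx =>
    ⟨le_of_lt (lt_of_le_of_lt ht₀.1 hx.1), le_of_lt (lt_of_lt_of_le hx.2 ht.2)⟩
  set M := ∑ l ∈ Finset.range k, m l with hM
  set G : ℕ → ℝ → ℝ := fun c =>
    if hc : c < M then Set.indicator (Set.Ioo t₀ t) ((hfint c hc).1.mk (f c)) else 0
    with hGdef
  have hfeq : ∀ c (hc : c < M),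
      f c =ᵐ[volume.restrict (Set.Ioo t₀ t)] (hfint c hc).1.mk (f c) :=
    fun c hc => ae_restrict_of_ae_restrict_of_subset hIoosub (hfint c hc).1.ae_eq_mk
  have hGint : ∀ c, Integrable (G c) := by
    intro c
    simp only [hGdef]
    split_ifs with hc
    · have h1 : IntegrableOn (f c) (Set.Ioo t₀ t) := (hfint c hc).mono_set hIoosub
      have h2 : IntegrableOn ((hfint c hc).1.mk (f c)) (Set.Ioo t₀ t) :=
        h1.congr (hfeq c hc)
      exact h2.integrable_indicator measurableSet_Ioo
    · exact integrable_zero _ _ _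
  have hGae : ∀ c, c < M →
      Set.indicator (Set.Ioo t₀ t) (f c) =ᵐ[(volume : Measure ℝ)] G c := by
    intro c hc
    have h1 : ∀ᵐ y ∂(volume : Measure ℝ), y ∈ Set.Ioo t₀ t →
        f c y = (hfint c hc).1.mk (f c) y :=
      (ae_restrict_iff' measurableSet_Ioo).1 (hfeq c hc)
    filter_upwards [h1] with y hy
    simp only [hGdef, dif_pos hc]
    by_cases hmem : y ∈ Set.Ioo t₀ t
    · rw [Set.indicator_of_mem hmem, Set.indicator_of_mem hmem]
      exact hy hmem
    · rw [Set.indicator_of_notMem hmem, Set.indicator_of_notMem hmem]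
  -- Replace `f` by `G` in the left-hand side
  have hL : ∀ i ∈ Finset.range k,
      (∫ s in simplex (m i) t₀ t, ∏ j : Fin (m i),
          f ((∑ l ∈ Finset.range i, m l) + (j : ℕ)) (s j))
        = ∫ s in simplex (m i) t₀ t, ∏ j : Fin (m i),
            G ((∑ l ∈ Finset.range i, m l) + (j : ℕ)) (s j) := by
    intro i hi
    have hbound : ∀ j : Fin (m i), (∑ l ∈ Finset.range i, m l) + (j : ℕ) < M := by
      intro j
      have h1 : (∑ l ∈ Finset.range i, m l) + (j : ℕ) < ∑ l ∈ Finset.range (i + 1), m l := by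
        rw [Finset.sum_range_succ]
        have := j.2
        omega
      have h2 : ∑ l ∈ Finset.range (i + 1), m l ≤ M :=
        Finset.sum_le_sum_of_subset (Finset.range_subset_range.2 (Finset.mem_range.1 hi))
      omega
    exact setIntegral_congr_coords t₀ t f G (fun j => (∑ l ∈ Finset.range i, m l) + (j : ℕ))
      (simplex (m i) t₀ t) (measurableSet_simplex (m i) t₀ t)
      (fun x hx j => hx.2 j) (fun j => hGae _ (hbound j))
  -- Replace `f` by `G` in the right-hand side
  have hR : ∀ σ : Equiv.Perm (Fin M),
      (∫ w in simplex M t₀ t, ∏ i : Fin M, f ((σ i : ℕ)) (w i))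
        = ∫ w in simplex M t₀ t, ∏ i : Fin M, G ((σ i : ℕ)) (w i) := by
    intro σ
    exact setIntegral_congr_coords t₀ t f G (fun i => ((σ i : Fin M) : ℕ))
      (simplex M t₀ t) (measurableSet_simplex M t₀ t)
      (fun x hx j => hx.2 j) (fun i => hGae _ (σ i).2)
  -- the partition of the block set
  have hcover : blockSet k m t₀ t =ᵐ[(volume : Measure (Fin M → ℝ))]
      ⋃ σ ∈ Finset.univ.filter
        (fun σ : Equiv.Perm (Fin M) => IsShuffle k m σ⁻¹), permSet t₀ t σ := by
    rw [Filter.eventuallyEq_set]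
    filter_upwards [ae_injective M] with x hxinj
    constructor
    · intro hx
      obtain ⟨σ, hσsh, hσmem⟩ := exists_shuffle_of_blockSet hx hxinj
      exact Set.mem_biUnion (Finset.mem_filter.2 ⟨Finset.mem_univ _, hσsh⟩) hσmem
    · intro hx
      simp only [Set.mem_iUnion] at hx
      obtain ⟨σ, hσfil, hmem⟩ := hx
      exact shuffle_mem_blockSet (Finset.mem_filter.1 hσfil).2 hmem
  have hdisj : Set.Pairwise
      ↑(Finset.univ.filter (fun σ : Equiv.Perm (Fin M) => IsShuffle k m σ⁻¹))
      (Function.onFun Disjoint (permSet t₀ t (M := M))) := by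
    intro σ _ τ _ hne
    refine Set.disjoint_left.2 fun x hx1 hx2 => hne ?_
    exact perm_eq_of_strictMono hx1.1 hx2.1
  have hGprodint : Integrable (fun x : Fin M → ℝ => ∏ j : Fin M, G (j : ℕ) (x j)) :=
    Integrable.fintype_prod (f := fun (j : Fin M) => G (j : ℕ)) (fun j => hGint _)
  calc
    (∏ i ∈ Finset.range k,
        ∫ s in simplex (m i) t₀ t, ∏ j : Fin (m i),
          f ((∑ l ∈ Finset.range i, m l) + (j : ℕ)) (s j))
        = ∏ i ∈ Finset.range k,
            ∫ s in simplex (m i) t₀ t, ∏ j : Fin (m i),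
              G ((∑ l ∈ Finset.range i, m l) + (j : ℕ)) (s j) :=
          Finset.prod_congr rfl hL
    _ = ∫ x in blockSet k m t₀ t, ∏ j : Fin M, G (j : ℕ) (x j) :=
          lemA t₀ t G hGint m k
    _ = ∫ x in ⋃ σ ∈ Finset.univ.filter
            (fun σ : Equiv.Perm (Fin M) => IsShuffle k m σ⁻¹), permSet t₀ t σ,
          ∏ j : Fin M, G (j : ℕ) (x j) := setIntegral_congr_set hcover
    _ = ∑ σ ∈ Finset.univ.filter
            (fun σ : Equiv.Perm (Fin M) => IsShuffle k m σ⁻¹),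
          ∫ x in permSet t₀ t σ, ∏ j : Fin M, G (j : ℕ) (x j) :=
          integral_biUnion_finset _ (fun σ _ => measurableSet_permSet t₀ t σ) hdisj
            (fun σ _ => hGprodint.integrableOn)
    _ = ∑ σ ∈ Finset.univ.filter
            (fun σ : Equiv.Perm (Fin M) => IsShuffle k m σ⁻¹),
          ∫ w in simplex M t₀ t, ∏ i : Fin M, G ((σ i : ℕ)) (w i) :=
          Finset.sum_congr rfl fun σ _ => (lemB t₀ t G σ).symm
    _ = ∑ σ ∈ Finset.univ.filter
            (fun σ : Equiv.Perm (Fin M) => IsShuffle k m σ⁻¹),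
          ∫ w in simplex M t₀ t, ∏ i : Fin M, f ((σ i : ℕ)) (w i) :=
          Finset.sum_congr rfl fun σ _ => (hR σ).symm
end
end
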